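/- Every moral acyclic orientation of a finite connected undirected chordal graph has exactly one source vertex (a vertex with no incoming directed edge). -/

import Mathlib

/-- A chord of a closed walk: an edge of `G` between two vertices of the walk
that is not an edge of the walk. -/
def SimpleGraph.Walk.HasChord {V : Type*} {G : SimpleGraph V} {v : V}
    (c : G.Walk v v) : Prop :=
  ∃ a b, a ∈ c.support ∧ b ∈ c.support ∧ G.Adj a b ∧ s(a, b) ∉ c.edges

/-- A graph is chordal if every cycle with four or more vertices has a chord. -/
def SimpleGraph.IsChordalGraph {V : Type*} (G : SimpleGraph V) : Prop :=
  ∀ (v : V) (c : G.Walk v v), c.IsCycle → 4 ≤ c.length → c.HasChord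

/-- A vertex is dominating if it is adjacent to every other vertex. -/
def SimpleGraph.IsDominatingVertex {V : Type*} (G : SimpleGraph V) (v : V) : Prop :=
  ∀ w, w ≠ v → G.Adj v w

/-- `D` is an orientation of `G`: each edge gets exactly one direction. -/
def SimpleGraph.IsOrientation {V : Type*} (G : SimpleGraph V) (D : V → V → Prop) : Prop :=
  (∀ a b, G.Adj a b ↔ (D a b ∨ D b a)) ∧ ∀ a b, ¬(D a b ∧ D b a)

/-- An orientation (directed relation) is acyclic if it has no directed cycle. -/
def IsAcyclicRel {V : Type*} (D : V → V → Prop) : Prop :=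
  ∀ a, ¬ Relation.TransGen D a a

/-- An orientation is moral (w.r.t. `G`) if it contains no v-structure. -/
def SimpleGraph.IsMoralOrient {V : Type*} (G : SimpleGraph V) (D : V → V → Prop) : Prop :=
  ∀ a b c, D a c → D b c → a ≠ b → G.Adj a b

/-- The number of moral acyclic orientations of `G`. -/
noncomputable def moralAcyclicCount {V : Type*} (G : SimpleGraph V) : ℕ :=
  Set.ncard {D : V → V → Prop |
    G.IsOrientation D ∧ IsAcyclicRel D ∧ G.IsMoralOrient D}

/-- Join of two graphs: all edges of each plus all edges across. -/
def joinGraph {V1 V2 : Type*} (G1 : SimpleGraph V1) (G2 : SimpleGraph V2) :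
    SimpleGraph (V1 ⊕ V2) where
  Adj x y := match x, y with
    | .inl a, .inl b => G1.Adj a b
    | .inr a, .inr b => G2.Adj a b
    | .inl _, .inr _ => True
    | .inr _, .inl _ => True
  symm := ⟨by rintro (a | a) (b | b) h <;> simp_all [SimpleGraph.adj_comm]⟩
  loopless := ⟨by rintro (a | a) h <;> simp_all⟩

/-- Disjoint union of two graphs. -/
def sumGraph {V1 V2 : Type*} (G1 : SimpleGraph V1) (G2 : SimpleGraph V2) :
    SimpleGraph (V1 ⊕ V2) where
  Adj x y := match x, y with
    | .inl a, .inl b => G1.Adj a b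
    | .inr a, .inr b => G2.Adj a b
    | _, _ => False
  symm := ⟨by rintro (a | a) (b | b) h <;> simp_all [SimpleGraph.adj_comm]⟩
  loopless := ⟨by rintro (a | a) h <;> simp_all⟩


lemma exists_walk_getVert_left {V : Type*} {G : SimpleGraph V} :
    ∀ {u v : V} (p : G.Walk u v) (i : ℕ),
    ∃ q : G.Walk u (p.getVert i), q.length ≤ i := by
  intro u v p
  induction p with
  | nil => intro i; exact ⟨(SimpleGraph.Walk.nil).copy rfl rfl, by simp⟩
  | cons h q ih =>
    intro i
    cases i with
    | zero => exact ⟨(SimpleGraph.Walk.nil).copy rfl (by simp), by simp⟩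
    | succ n =>
      obtain ⟨r, hr⟩ := ih n
      exact ⟨(r.cons h).copy rfl (by simp), by simpa using Nat.succ_le_succ hr⟩

lemma exists_walk_getVert_right {V : Type*} {G : SimpleGraph V} :
    ∀ {u v : V} (p : G.Walk u v) (i : ℕ),
    ∃ q : G.Walk (p.getVert i) v, q.length ≤ p.length - i := by
  intro u v p
  induction p with
  | nil => intro i; exact ⟨(SimpleGraph.Walk.nil).copy rfl rfl, by simp⟩
  | cons h q ih =>
    intro i
    cases i with
    | zero =>
      exact ⟨(q.cons h).copy (by simp) rfl, by simp⟩
    | succ n =>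
      obtain ⟨r, hr⟩ := ih n
      exact ⟨r.copy (by simp) rfl, by simpa using hr⟩

lemma dist_getVert_left {V : Type*} {G : SimpleGraph V} {u v : V} (p : G.Walk u v) (i : ℕ) :
    G.dist u (p.getVert i) ≤ i := by
  obtain ⟨q, hq⟩ := exists_walk_getVert_left p i
  exact le_trans (SimpleGraph.dist_le q) hq

lemma dist_getVert_right {V : Type*} {G : SimpleGraph V} {u v : V} (p : G.Walk u v) (i : ℕ) :
    G.dist (p.getVert i) v ≤ p.length - i := by
  obtain ⟨q, hq⟩ := exists_walk_getVert_right p i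
  exact le_trans (SimpleGraph.dist_le q) hq

lemma sources_eq {V : Type*} (G : SimpleGraph V)
    (hconn : G.Connected)
    (D : V → V → Prop) (hor : G.IsOrientation D)
    (hm : G.IsMoralOrient D) {s t : V}
    (hs : ∀ w : V, ¬ D w s) (ht : ∀ w : V, ¬ D w t) : s = t := by
  by_contra hne
  have hdpos : 0 < G.dist s t := hconn.pos_dist_of_ne hne
  obtain ⟨p, hp⟩ := SimpleGraph.exists_walk_of_dist_ne_zero (Nat.pos_iff_ne_zero.mp hdpos)
  set n := p.length with hn
  have hn1 : 1 ≤ n := by omega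
  -- the set of indices where the edge is not directed forward
  have hSne : ¬ D (p.getVert (n - 1)) (p.getVert n) := by
    have : p.getVert n = t := p.getVert_length
    rw [this]; exact ht _
  classical
  have hex : ∃ i, i < n ∧ ¬ D (p.getVert i) (p.getVert (i + 1)) :=
    ⟨n - 1, by omega, by rwa [Nat.sub_add_cancel hn1]⟩
  set i := Nat.find hex with hidef
  have hilt : i < n := (Nat.find_spec hex).1
  have hiD : ¬ D (p.getVert i) (p.getVert (i + 1)) := (Nat.find_spec hex).2
  have hmin : ∀ k, k < i → ¬ (k < n ∧ ¬ D (p.getVert k) (p.getVert (k + 1))) :=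
    fun k hk => Nat.find_min hex hk
  have hadj : ∀ j, j < n → G.Adj (p.getVert j) (p.getVert (j + 1)) := fun j hj =>
    p.adj_getVert_succ (by omega)
  have hi0 : i ≠ 0 := by
    intro h
    rw [h] at hiD
    have : D (p.getVert 0) (p.getVert 1) := by
      rcases (hor.1 _ _).mp (hadj 0 (by omega)) with h | h
      · exact h
      · exact absurd h (by rw [p.getVert_zero]; exact hs _)
    exact hiD this
  obtain ⟨j, hij⟩ : ∃ j, i = j + 1 := ⟨i - 1, by omega⟩
  rw [hij] at hilt hiD
  have hjD : D (p.getVert j) (p.getVert (j + 1)) := by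
    by_contra hc
    exact hmin j (by omega) ⟨by omega, hc⟩
  have hbackD : D (p.getVert (j + 2)) (p.getVert (j + 1)) := by
    rcases (hor.1 _ _).mp (hadj (j + 1) hilt) with h | h
    · exact absurd h hiD
    · exact h
  have hd1 : G.dist s (p.getVert j) ≤ j := dist_getVert_left p j
  have hd2 : G.dist (p.getVert (j + 2)) t ≤ n - (j + 2) := dist_getVert_right p (j + 2)
  have t1 : G.dist s t ≤ G.dist s (p.getVert j) + G.dist (p.getVert j) t :=
    hconn.dist_triangle
  have hne2 : p.getVert j ≠ p.getVert (j + 2) := by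
    intro heq
    have t2 : G.dist (p.getVert j) t ≤ n - (j + 2) := by rw [heq]; exact hd2
    omega
  have hadj2 : G.Adj (p.getVert j) (p.getVert (j + 2)) := hm _ _ _ hjD hbackD hne2
  have hd3 : G.dist (p.getVert j) (p.getVert (j + 2)) = 1 :=
    SimpleGraph.dist_eq_one_iff_adj.mpr hadj2
  have t2 : G.dist (p.getVert j) t ≤
      G.dist (p.getVert j) (p.getVert (j + 2)) + G.dist (p.getVert (j + 2)) t :=
    hconn.dist_triangle
  omega

theorem unique_source {V : Type*} [Fintype V] (G : SimpleGraph V)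
    (hconn : G.Connected) (hchord : G.IsChordalGraph)
    (D : V → V → Prop) (hor : G.IsOrientation D)
    (hac : IsAcyclicRel D) (hm : G.IsMoralOrient D) :
    ∃! s : V, ∀ w : V, ¬ D w s := by
  classical
  haveI : Nonempty V := hconn.nonempty
  have hwf : WellFounded (Relation.TransGen D) := by
    haveI : IsTrans V (Relation.TransGen D) := ⟨fun _ _ _ => Relation.TransGen.trans⟩
    haveI : IsIrrefl V (Relation.TransGen D) := ⟨hac⟩
    exact Finite.wellFounded_of_trans_of_irrefl _
  obtain ⟨m, -, hmin⟩ := hwf.has_min Set.univ ⟨Classical.arbitrary V, trivial⟩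
  refine ⟨m, fun w hw => hmin w trivial (Relation.TransGen.single hw), fun y hy =>
    sources_eq G hconn D hor hm hy (fun w hw => hmin w trivial (Relation.TransGen.single hw))⟩
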